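/- Let a be a normal bounded operator on H (a a* = a* a), let λ ≠ μ be complex numbers, let p be the orthogonal projection onto ker(a − λ) and q the orthogonal projection onto ker(a − μ). Then for every bounded operator u on H: |λ − μ| · ‖q u p‖ ≤ ‖u a − a u‖. -/

import Mathlib

/-- Let `a` be a normal bounded operator, `lam ≠ mu` complex numbers, `p` the
orthogonal projection onto `ker (a - lam)` and `q` the orthogonal projection onto
`ker (a - mu)`. Then for every bounded `u`: `|lam - mu| * ‖q u p‖ ≤ ‖u a - a u‖`. -/
theorem eigenprojection_commutator_estimate
    {H : Type*} [NormedAddCommGroup H] [InnerProductSpace ℂ H] [CompleteSpace H]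
    [TopologicalSpace.SeparableSpace H]
    (hinf : ¬ FiniteDimensional ℂ H)
    (a : H →L[ℂ] H) (ha : a * star a = star a * a)
    (lam mu : ℂ) (hlm : lam ≠ mu)
    (p : H →L[ℂ] H) (hpsa : IsSelfAdjoint p) (hpidem : p * p = p)
    (hpfix : ∀ ξ : H, p ξ = ξ ↔ a ξ = lam • ξ)
    (q : H →L[ℂ] H) (hqsa : IsSelfAdjoint q) (hqidem : q * q = q)
    (hqfix : ∀ ξ : H, q ξ = ξ ↔ a ξ = mu • ξ) :
    ∀ u : H →L[ℂ] H, ‖lam - mu‖ * ‖q * u * p‖ ≤ ‖u * a - a * u‖ := by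
  intro u
  -- a ∘ p = lam • p
  have hap : a * p = lam • p := by
    ext ξ
    have hfix : p (p ξ) = p ξ := congrFun (congrArg DFunLike.coe hpidem) ξ
    simpa using (hpfix (p ξ)).mp hfix
  -- star a ∘ q = conj mu • q
  have hstarq : star a * q = (starRingEnd ℂ mu) • q := by
    ext ξ
    set η := q ξ with hη
    have hfix : q (q ξ) = q ξ := congrFun (congrArg DFunLike.coe hqidem) ξ
    have haη : a η = mu • η := (hqfix η).mp hfix
    set b : H →L[ℂ] H := a - mu • 1 with hb
    have hbη : b η = 0 := by simp [hb, haη]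
    have hbnormal : b * star b = star b * b := by
      simp only [hb, star_sub, star_smul, star_one]
      simp only [mul_sub, sub_mul, smul_mul_assoc, mul_smul_comm, mul_one, one_mul, ha]
      module
    have h1 : (inner ℂ ((star b) η) ((star b) η) : ℂ) = inner ℂ η (b ((star b) η)) := by
      rw [ContinuousLinearMap.star_eq_adjoint]
      exact ContinuousLinearMap.adjoint_inner_left b ((ContinuousLinearMap.adjoint b) η) η
    have hcomm : b ((star b) η) = (star b) (b η) := by
      have := congrFun (congrArg DFunLike.coe hbnormal) η
      simpa [ContinuousLinearMap.mul_apply] using this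
    have h3 : (inner ℂ η ((star b) (b η)) : ℂ) = inner ℂ (b η) (b η) := by
      rw [ContinuousLinearMap.star_eq_adjoint, ContinuousLinearMap.adjoint_inner_right]
    have hinner : (inner ℂ ((star b) η) ((star b) η) : ℂ) = 0 := by
      rw [h1, hcomm, h3, hbη]
      simp
    have hzero : (star b) η = 0 := inner_self_eq_zero.mp hinner
    have hsub : (star a) η - (starRingEnd ℂ mu) • η = 0 := by
      simpa [hb, star_sub, star_smul, star_one] using hzero
    simpa using sub_eq_zero.mp hsub
  -- q ∘ a = mu • q
  have hqa : q * a = mu • q := by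
    have := congrArg star hstarq
    simpa [star_smul, star_mul, hqsa.star_eq, Complex.conj_conj] using this
  -- key identity
  have key : q * (u * a - a * u) * p = (lam - mu) • (q * u * p) := by
    have h1 : q * (u * a) * p = lam • (q * u * p) := by
      rw [show q * (u * a) * p = q * u * (a * p) by simp [mul_assoc], hap,
        mul_smul_comm]
    have h2 : q * (a * u) * p = mu • (q * u * p) := by
      rw [show q * (a * u) * p = (q * a) * u * p by simp [mul_assoc], hqa,
        smul_mul_assoc, smul_mul_assoc]
    rw [mul_sub, sub_mul, h1, h2, sub_smul]
  -- norms of projections ≤ 1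
  have hpn : ‖p‖ ≤ 1 := by
    have h : ‖p‖ * ‖p‖ = ‖p‖ := by
      rw [← CStarRing.norm_star_mul_self, hpsa.star_eq, hpidem]
    nlinarith [norm_nonneg p]
  have hqn : ‖q‖ ≤ 1 := by
    have h : ‖q‖ * ‖q‖ = ‖q‖ := by
      rw [← CStarRing.norm_star_mul_self, hqsa.star_eq, hqidem]
    nlinarith [norm_nonneg q]
  calc ‖lam - mu‖ * ‖q * u * p‖ = ‖(lam - mu) • (q * u * p)‖ := by
        rw [norm_smul]
    _ = ‖q * (u * a - a * u) * p‖ := by rw [key]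
    _ ≤ ‖q * (u * a - a * u)‖ * ‖p‖ := norm_mul_le _ _
    _ ≤ ‖q‖ * ‖u * a - a * u‖ * ‖p‖ := by
        gcongr
        exact norm_mul_le _ _
    _ ≤ ‖u * a - a * u‖ := by
        nlinarith [norm_nonneg q, norm_nonneg p, norm_nonneg (u * a - a * u),
          mul_nonneg (norm_nonneg q) (norm_nonneg (u * a - a * u))]
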